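/- arXiv:1810.07244 — 3 statements merged into one kernel-verified Lean document; each statement's English description precedes it below -/
import Mathlib

section
/- Let α be an irrational real number and let R_α denote the rotation x ↦ x + α on the circle ℝ/ℤ. Then the centralizer of R_α in the group of homeomorphisms of the circle is exactly the group of rotations {R_β : β ∈ ℝ/ℤ}. -/
lemma dense_zmultiples_aux (α : ℝ) (hα : Irrational α) :
    Dense ((AddSubgroup.zmultiples ((α : UnitAddCircle))) : Set UnitAddCircle) := by
  have hS : Dense ((AddSubgroup.closure ({1, α} : Set ℝ)) : Set ℝ) := by
    rcases (AddSubgroup.closure ({1, α} : Set ℝ)).dense_or_cyclic with h | ⟨a, ha⟩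
    · exact h
    · exfalso
      have h1 : (1 : ℝ) ∈ AddSubgroup.closure ({1, α} : Set ℝ) :=
        AddSubgroup.subset_closure (by simp)
      have h2 : α ∈ AddSubgroup.closure ({1, α} : Set ℝ) :=
        AddSubgroup.subset_closure (by simp)
      rw [ha, AddSubgroup.mem_closure_singleton] at h1 h2
      obtain ⟨m, hm⟩ := h1
      obtain ⟨n, hn⟩ := h2
      have hm0 : (m : ℝ) ≠ 0 := by
        rintro h
        rw [zsmul_eq_mul, h, zero_mul] at hm; exact one_ne_zero hm.symm
      have : α = (n : ℝ) / (m : ℝ) := by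
        rw [zsmul_eq_mul] at hm hn
        field_simp
        rw [← hn, mul_assoc, mul_comm a ((m:ℝ)), hm, mul_one]
      exact hα ⟨(n : ℚ) / (m : ℚ), by push_cast [this]; ring⟩
  -- map through the quotient
  let π : ℝ →+ UnitAddCircle := QuotientAddGroup.mk' _
  have hπc : Continuous π := continuous_quotient_mk'
  have hπs : Function.Surjective π := Quotient.mk''_surjective
  have hmap : (AddSubgroup.closure ({1, α} : Set ℝ)).map π
      = AddSubgroup.zmultiples ((α : UnitAddCircle)) := by
    rw [AddMonoidHom.map_closure]
    have himg : π '' ({1, α} : Set ℝ) = {(0 : UnitAddCircle), (α : UnitAddCircle)} := by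
      have : π (1 : ℝ) = 0 := by
        simp only [π, QuotientAddGroup.mk'_apply, QuotientAddGroup.eq_zero_iff]
        exact AddSubgroup.mem_zmultiples 1
      simp [Set.image_insert_eq, this]
      rfl
    rw [himg, Set.insert_eq, AddSubgroup.closure_union]
    simp [← AddSubgroup.zmultiples_eq_closure]
  rw [← hmap]
  have : ((AddSubgroup.closure ({1, α} : Set ℝ)).map π : Set UnitAddCircle)
      = π '' (AddSubgroup.closure ({1, α} : Set ℝ)) := rfl
  rw [this]
  exact (hπs.denseRange).dense_image hπc hS

/-- For irrational `α`, the centralizer of the rotation `R_α : x ↦ x + α` in the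
group of homeomorphisms of the circle `ℝ/ℤ` is exactly the group of rotations. -/
theorem stmt_3 (α : ℝ) (hα : Irrational α) :
    {h : UnitAddCircle ≃ₜ UnitAddCircle |
        ∀ x, h (x + (α : UnitAddCircle)) = h x + (α : UnitAddCircle)}
      = {h : UnitAddCircle ≃ₜ UnitAddCircle | ∃ β : UnitAddCircle, ∀ x, h x = x + β} := by
  ext h
  simp only [Set.mem_setOf_eq]
  constructor
  · intro hc
    refine ⟨h 0, ?_⟩
    have key : ∀ n : ℤ, ∀ x : UnitAddCircle,
        h (x + n • (α : UnitAddCircle)) = h x + n • (α : UnitAddCircle) := by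
      intro n
      induction n using Int.induction_on with
      | zero => simp
      | succ k ih =>
          intro x
          have : x + ((k : ℤ) + 1) • (α : UnitAddCircle)
              = (x + (k : ℤ) • (α : UnitAddCircle)) + (α : UnitAddCircle) := by
            rw [add_zsmul, one_zsmul, add_assoc]
          rw [this, hc, ih, add_zsmul, one_zsmul, add_assoc]
      | pred k ih =>
          intro x
          have e1 : (x + (-(k : ℤ) - 1) • (α : UnitAddCircle)) + (α : UnitAddCircle)
              = x + (-(k : ℤ)) • (α : UnitAddCircle) := by
            rw [sub_zsmul, one_zsmul]; abel
          have := hc (x + (-(k : ℤ) - 1) • (α : UnitAddCircle))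
          rw [e1, ih] at this
          have := congrArg (fun y => y - (α : UnitAddCircle)) this
          simp only [add_sub_cancel_right] at this
          rw [← this, sub_zsmul, one_zsmul]; abel
    have heq : (h : UnitAddCircle → UnitAddCircle) = fun x => x + h 0 := by
      apply Continuous.ext_on (dense_zmultiples_aux α hα) h.continuous
        (by continuity)
      rintro x ⟨n, rfl⟩
      have := key n 0
      rw [zero_add] at this
      simpa [add_comm] using this
    intro x
    exact congrFun heq x
  · rintro ⟨β, hβ⟩ x
    rw [hβ, hβ]
    abel
end

section
/- The restriction of the rotation number map ρ to the centralizer Z⁰(h) of a circle homeomorphism h conjugate to an irrational rotation is an injective continuous group homomorphism into S¹ = ℝ/ℤ. -/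
open Classical

/-- The rotation number of a circle homeomorphism, defined via the translation number of a
(chosen) monotone degree-one lift, and `0` if no such lift exists. -/
noncomputable def circleRotationNumber (g : UnitAddCircle ≃ₜ UnitAddCircle) : UnitAddCircle :=
  if h : ∃ G : CircleDeg1Lift, ∀ x : ℝ, ((G x : ℝ) : UnitAddCircle) = g (x : UnitAddCircle) then
    ((h.choose.translationNumber : ℝ) : UnitAddCircle)
  else 0
namespace Stmt5Aux
open Filter Set




/-! ### Basic facts about `UnitAddCircle` -/

lemma coe_int_zero (m : ℤ) : ((m : ℝ) : UnitAddCircle) = 0 := by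
  rw [AddCircle.coe_eq_zero_iff]
  exact ⟨m, by simp⟩

lemma coe_eq_coe_iff {x y : ℝ} :
    (x : UnitAddCircle) = (y : UnitAddCircle) ↔ ∃ m : ℤ, x = y + m := by
  constructor
  · intro hxy
    have h0 : ((x - y : ℝ) : UnitAddCircle) = 0 := by
      rw [AddCircle.coe_sub, hxy, sub_self]
    rw [AddCircle.coe_eq_zero_iff] at h0
    obtain ⟨m, hm⟩ := h0
    refine ⟨m, ?_⟩
    have : (m : ℝ) = x - y := by simpa using hm
    linarith
  · rintro ⟨m, rfl⟩
    rw [AddCircle.coe_add, coe_int_zero, add_zero]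

lemma coe_add_one (x : ℝ) : ((x + 1 : ℝ) : UnitAddCircle) = (x : UnitAddCircle) :=
  AddCircle.coe_add_period 1 x

/-! ### Uniqueness of monotone lifts up to an integer constant -/

lemma lift_unique {e : UnitAddCircle → UnitAddCircle} (he : Function.Injective e)
    {F G : CircleDeg1Lift} (hF : ∀ x : ℝ, ((F x : ℝ) : UnitAddCircle) = e x)
    (hG : ∀ x : ℝ, ((G x : ℝ) : UnitAddCircle) = e x) :
    ∃ m : ℤ, ∀ x, F x = G x + m := by
  have hdiff : ∀ x : ℝ, ∃ m : ℤ, F x = G x + m := fun x =>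
    coe_eq_coe_iff.mp (by rw [hF, hG])
  have hcirc : ∀ x y : ℝ, G x = G y → (x : UnitAddCircle) = (y : UnitAddCircle) := by
    intro x y hxy
    apply he
    rw [← hG x, ← hG y, hxy]
  have key : ∀ x y : ℝ, x ≤ y → y < x + 1 → F y - G y = F x - G x := by
    intro x y hxy hyx
    obtain ⟨m₁, hm₁⟩ := hdiff x
    obtain ⟨m₂, hm₂⟩ := hdiff y
    have hyx' : ∀ k : ℤ, y = x + k → y = x := by
      intro k hk
      have h0 : (0 : ℝ) ≤ (k : ℝ) := by linarith
      have h1 : (k : ℝ) < 1 := by linarith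
      have hk0 : k = 0 := by
        have h0' : (0 : ℤ) ≤ k := by exact_mod_cast h0
        have h1' : k < 1 := by exact_mod_cast h1
        omega
      rw [hk0] at hk
      simpa using hk
    rcases lt_trichotomy m₁ m₂ with hlt | heq | hgt
    · have hFy : F y ≤ F x + 1 := by
        calc F y ≤ F (x + 1) := F.mono (by linarith)
          _ = F x + 1 := F.map_add_one x
      have hm : (m₁ : ℝ) + 1 ≤ (m₂ : ℝ) := by exact_mod_cast (by omega : m₁ + 1 ≤ m₂)
      have hGyx : G y ≤ G x := by linarith
      have hGxy : G x ≤ G y := G.mono hxy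
      have hGeq : G x = G y := le_antisymm hGxy hGyx
      have hcoe := hcirc x y hGeq
      obtain ⟨k, hk⟩ := coe_eq_coe_iff.mp hcoe.symm
      have := hyx' k hk
      subst this
      linarith
    · have : (m₁ : ℝ) = (m₂ : ℝ) := by exact_mod_cast heq
      linarith
    · have hm : (m₂ : ℝ) + 1 ≤ (m₁ : ℝ) := by exact_mod_cast (by omega : m₂ + 1 ≤ m₁)
      have hFxy : F x ≤ F y := F.mono hxy
      have h1 : G x + 1 ≤ G y := by linarith
      have h2 : G y ≤ G (x + 1) := G.mono (le_of_lt hyx)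
      have hGeq : G y = G (x + 1) := by
        rw [G.map_add_one] at h2 ⊢
        linarith
      have hcoe := hcirc y (x + 1) hGeq
      have hcoe' : (y : UnitAddCircle) = (x : UnitAddCircle) := by
        rw [hcoe, coe_add_one]
      obtain ⟨k, hk⟩ := coe_eq_coe_iff.mp hcoe'
      have := hyx' k hk
      subst this
      linarith
  obtain ⟨m, hm⟩ := hdiff 0
  refine ⟨m, fun x => ?_⟩
  have hx : Int.fract x + (⌊x⌋ : ℝ) = x := by
    rw [Int.fract]; ring
  have h1 : F x - G x = F (Int.fract x) - G (Int.fract x) := by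
    conv_lhs => rw [← hx]
    rw [F.map_add_int, G.map_add_int]
    ring
  have h2 := key 0 (Int.fract x) (Int.fract_nonneg x) (by simpa using Int.fract_lt_one x)
  have h3 : F x - G x = F 0 - G 0 := by rw [h1, h2]
  linarith

lemma tau_shift {F G : CircleDeg1Lift} {m : ℤ} (hm : ∀ x, F x = G x + m) :
    F.translationNumber = m + G.translationNumber := by
  have hFeq : F =
      ((CircleDeg1Lift.translate (Multiplicative.ofAdd (m : ℝ))) : CircleDeg1Lift) * G := by
    apply CircleDeg1Lift.ext
    intro x
    rw [CircleDeg1Lift.mul_apply, CircleDeg1Lift.translate_apply, hm x, add_comm]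
  have hcomm : Commute
      ((CircleDeg1Lift.translate (Multiplicative.ofAdd (m : ℝ))) : CircleDeg1Lift) G := by
    rw [CircleDeg1Lift.commute_iff_commute]
    intro x
    simp only [CircleDeg1Lift.translate_apply]
    rw [G.map_int_add]
  rw [hFeq, CircleDeg1Lift.translationNumber_mul_of_commute hcomm,
    CircleDeg1Lift.translationNumber_translate]

lemma tau_mod_eq {e : UnitAddCircle → UnitAddCircle} (he : Function.Injective e)
    {F G : CircleDeg1Lift} (hF : ∀ x : ℝ, ((F x : ℝ) : UnitAddCircle) = e x)
    (hG : ∀ x : ℝ, ((G x : ℝ) : UnitAddCircle) = e x) :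
    ((F.translationNumber : ℝ) : UnitAddCircle) = ((G.translationNumber : ℝ) : UnitAddCircle) := by
  obtain ⟨m, hm⟩ := lift_unique he hF hG
  rw [tau_shift hm, AddCircle.coe_add, coe_int_zero, zero_add]




lemma circleRotationNumber_eq (g : UnitAddCircle ≃ₜ UnitAddCircle) (G : CircleDeg1Lift)
    (hG : ∀ x : ℝ, ((G x : ℝ) : UnitAddCircle) = g (x : UnitAddCircle)) :
    circleRotationNumber g = ((G.translationNumber : ℝ) : UnitAddCircle) := by
  have hex : ∃ G' : CircleDeg1Lift, ∀ x : ℝ, ((G' x : ℝ) : UnitAddCircle) = g (x : UnitAddCircle) :=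
    ⟨G, hG⟩
  rw [circleRotationNumber, dif_pos hex]
  exact tau_mod_eq (g.injective) hex.choose_spec hG

lemma dist_map_le (F : CircleDeg1Lift) (x y : ℝ) : dist (F x) (F y) ≤ dist x y + 1 := by
  have h1 : ∀ a b : ℝ, a ≤ b → F b - F a ≤ b - a + 1 := by
    intro a b hab
    have h2 : F b ≤ F (a + ⌈b - a⌉) := F.mono (by linarith [Int.le_ceil (b - a)])
    rw [F.map_add_int] at h2
    have h3 : (⌈b - a⌉ : ℝ) < b - a + 1 := Int.ceil_lt_add_one _
    linarith
  rcases le_total x y with hxy | hxy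
  · have h2 := h1 x y hxy
    have h3 : F x ≤ F y := F.mono hxy
    rw [Real.dist_eq, Real.dist_eq, abs_of_nonpos (by linarith), abs_of_nonpos (by linarith)]
    linarith
  · have h2 := h1 y x hxy
    have h3 : F y ≤ F x := F.mono hxy
    rw [Real.dist_eq, Real.dist_eq, abs_of_nonneg (by linarith), abs_of_nonneg (by linarith)]
    linarith

lemma disp_bound (A : CircleDeg1Lift) (z : ℝ) : dist (A z) z ≤ |A 0| + 1 := by
  have h1 : A z ≤ A 0 + ⌈z⌉ := A.map_le_of_map_zero z
  have h2 : A 0 + ⌊z⌋ ≤ A z := A.le_map_of_map_zero z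
  have h3 : (⌈z⌉ : ℝ) < z + 1 := Int.ceil_lt_add_one z
  have h4 : z - 1 < (⌊z⌋ : ℝ) := Int.sub_one_lt_floor z
  rw [Real.dist_eq, abs_le]
  constructor
  · linarith [neg_abs_le (A 0)]
  · linarith [le_abs_self (A 0)]

lemma tau_comm (A B : CircleDeg1Lift) :
    (A * B).translationNumber = (B * A).translationNumber := by
  apply CircleDeg1Lift.translationNumber_eq_of_dist_bounded (2 * |B 0| + 3)
  intro n
  cases n with
  | zero => simp; positivity
  | succ m =>
    have hsemi : SemiconjBy B ((A * B) ^ m) ((B * A) ^ m) :=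
      SemiconjBy.pow_right (by rw [SemiconjBy, mul_assoc]) m
    have hevalAB : ((A * B) ^ (m + 1)) 0 = A (((B * A) ^ m) (B 0)) := by
      have h1 : (A * B) ^ (m + 1) = A * ((B * A) ^ m * B) := by
        rw [pow_succ', mul_assoc, hsemi.eq]
      rw [h1]
      simp [CircleDeg1Lift.mul_apply]
    have hevalBA : ((B * A) ^ (m + 1)) 0 = B (A (((B * A) ^ m) 0)) := by
      rw [pow_succ']
      simp [CircleDeg1Lift.mul_apply]
    rw [hevalAB, hevalBA]
    have hd1 : dist (A (((B * A) ^ m) (B 0))) (A (((B * A) ^ m) 0)) ≤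
        dist (((B * A) ^ m) (B 0)) (((B * A) ^ m) 0) + 1 := dist_map_le _ _ _
    have hd2 : dist (((B * A) ^ m) (B 0)) (((B * A) ^ m) 0) ≤ dist (B 0) 0 + 1 :=
      dist_map_le _ _ _
    have hd3 : dist (B (A (((B * A) ^ m) 0))) (A (((B * A) ^ m) 0)) ≤ |B 0| + 1 :=
      disp_bound _ _
    have hb0 : dist (B 0) 0 = |B 0| := by rw [Real.dist_eq, sub_zero]
    calc dist (A (((B * A) ^ m) (B 0))) (B (A (((B * A) ^ m) 0)))
        ≤ dist (A (((B * A) ^ m) (B 0))) (A (((B * A) ^ m) 0)) +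
          dist (A (((B * A) ^ m) 0)) (B (A (((B * A) ^ m) 0))) := dist_triangle _ _ _
      _ ≤ (dist (B 0) 0 + 1 + 1) + (|B 0| + 1) := by
          rw [dist_comm (A (((B * A) ^ m) 0))]
          linarith
      _ = 2 * |B 0| + 3 := by rw [hb0]; ring



/-- Translation numbers add along lifts of commuting injective circle maps. -/
lemma tau_add {e₁ e₂ : UnitAddCircle → UnitAddCircle} (h12 : ∀ z, e₁ (e₂ z) = e₂ (e₁ z))
    (hinj : Function.Injective fun z => e₁ (e₂ z))
    {A B : CircleDeg1Lift} (hA : ∀ x : ℝ, ((A x : ℝ) : UnitAddCircle) = e₁ x)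
    (hB : ∀ x : ℝ, ((B x : ℝ) : UnitAddCircle) = e₂ x) :
    (A * B).translationNumber = A.translationNumber + B.translationNumber := by
  have hAB : ∀ x : ℝ, (((A * B) x : ℝ) : UnitAddCircle) = e₁ (e₂ x) := by
    intro x
    rw [CircleDeg1Lift.mul_apply]
    calc ((A (B x) : ℝ) : UnitAddCircle) = e₁ ((B x : ℝ) : UnitAddCircle) := hA (B x)
      _ = e₁ (e₂ x) := by rw [hB x]
  have hBA : ∀ x : ℝ, (((B * A) x : ℝ) : UnitAddCircle) = e₁ (e₂ x) := by
    intro x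
    rw [CircleDeg1Lift.mul_apply]
    calc ((B (A x) : ℝ) : UnitAddCircle) = e₂ ((A x : ℝ) : UnitAddCircle) := hB (A x)
      _ = e₂ (e₁ x) := by rw [hA x]
      _ = e₁ (e₂ x) := (h12 _).symm
  obtain ⟨m, hm⟩ := lift_unique hinj hAB hBA
  have ht := tau_shift hm
  have ht2 := tau_comm A B
  have hm0 : (m : ℝ) = 0 := by linarith
  have hABBA : A * B = B * A := CircleDeg1Lift.ext fun x => by
    rw [hm x, hm0, add_zero]
  exact CircleDeg1Lift.translationNumber_mul_of_commute hABBA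

/-- The integer multiples of an irrational point are dense in the circle. -/
lemma dense_zmul (α : ℝ) (hα : Irrational α) :
    Dense {z : UnitAddCircle | ∃ n : ℤ, z = n • ((α : ℝ) : UnitAddCircle)} := by
  set mkQ : ℝ →+ UnitAddCircle := QuotientAddGroup.mk' (AddSubgroup.zmultiples (1 : ℝ)) with hmkQ
  have hmks : Function.Surjective mkQ := QuotientAddGroup.mk'_surjective _
  set E : AddSubgroup ℝ :=
    (AddSubgroup.zmultiples ((α : ℝ) : UnitAddCircle)).comap mkQ with hE
  have h1E : (1 : ℝ) ∈ E := by
    have : mkQ 1 = 0 := (QuotientAddGroup.eq_zero_iff _).mpr (AddSubgroup.mem_zmultiples _)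
    simp only [hE, AddSubgroup.mem_comap, this]
    exact zero_mem _
  have hαE : α ∈ E := by
    simp only [hE, AddSubgroup.mem_comap]
    exact AddSubgroup.mem_zmultiples _
  rcases E.dense_or_cyclic with hd | ⟨a, ha⟩
  · have himg : Dense (mkQ '' (E : Set ℝ)) := by
      rw [dense_iff_closure_eq]
      apply eq_univ_of_univ_subset
      calc univ = mkQ '' univ := (image_univ_of_surjective hmks).symm
        _ = mkQ '' (closure (E : Set ℝ)) := by rw [hd.closure_eq]
        _ ⊆ closure (mkQ '' (E : Set ℝ)) :=
            image_closure_subset_closure_image (continuous_quotient_mk')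
    refine himg.mono ?_
    rintro z ⟨x, hx, rfl⟩
    have hx2 : mkQ x ∈ AddSubgroup.zmultiples ((α : ℝ) : UnitAddCircle) := hx
    obtain ⟨n, hn⟩ := AddSubgroup.mem_zmultiples_iff.mp hx2
    exact ⟨n, hn.symm⟩
  · exfalso
    rw [← AddSubgroup.zmultiples_eq_closure] at ha
    rw [ha, AddSubgroup.mem_zmultiples_iff] at h1E hαE
    obtain ⟨n, hn⟩ := h1E
    obtain ⟨m, hm⟩ := hαE
    rw [zsmul_eq_mul] at hn hm
    have hn0 : (n : ℝ) ≠ 0 := by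
      intro h0
      rw [h0, zero_mul] at hn
      exact one_ne_zero hn.symm
    have ha0 : a ≠ 0 := by
      intro h0
      rw [h0, mul_zero] at hn
      exact one_ne_zero hn.symm
    apply hα
    refine ⟨(m : ℚ) / (n : ℚ), ?_⟩
    push_cast
    rw [div_eq_iff hn0]
    calc (m : ℝ) = (m : ℝ) * ((n : ℝ) * a) := by rw [hn, mul_one]
      _ = ((m : ℝ) * a) * n := by ring
      _ = α * n := by rw [hm]



/-- Any homeomorphism commuting with `h` (conjugate to an irrational rotation via `φ`) is a
conjugated rotation. -/
lemma classify (α : ℝ) (hα : Irrational α) (h φ : UnitAddCircle ≃ₜ UnitAddCircle)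
    (hconj : ∀ x, φ (h (φ.symm x)) = x + ((α : ℝ) : UnitAddCircle))
    {g : UnitAddCircle ≃ₜ UnitAddCircle} (hg : ∀ x, g (h x) = h (g x)) :
    ∀ y, g y = φ.symm (φ y + φ (g (φ.symm 0))) := by
  set A : UnitAddCircle := ((α : ℝ) : UnitAddCircle) with hA
  set ψ : UnitAddCircle → UnitAddCircle := fun x => φ (g (φ.symm x)) with hψ
  have hψc : Continuous ψ :=
    φ.continuous.comp (g.continuous.comp φ.symm.continuous)
  have hsymm : ∀ z, h (φ.symm z) = φ.symm (z + A) := by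
    intro z
    have := congrArg φ.symm (hconj z)
    rwa [φ.symm_apply_apply] at this
  have hstep : ∀ x, ψ (x + A) = ψ x + A := by
    intro x
    calc ψ (x + A) = φ (g (h (φ.symm x))) := by rw [hψ]; simp only [← hsymm]
      _ = φ (h (g (φ.symm x))) := by rw [hg]
      _ = φ (h (φ.symm (φ (g (φ.symm x))))) := by rw [φ.symm_apply_apply]
      _ = ψ x + A := hconj _
  have hiter : ∀ n : ℤ, ψ (n • A) = n • A + ψ 0 := by
    intro n
    induction n using Int.induction_on with
    | zero => simp
    | succ k ih =>
        have e1 : ((k : ℤ) + 1) • A = (k : ℤ) • A + A := by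
          rw [add_zsmul, one_zsmul]
        rw [e1, hstep, ih]
        abel
    | pred k ih =>
        have e1 : (-(k : ℤ) - 1) • A + A = (-(k : ℤ)) • A := by
          rw [sub_zsmul, one_zsmul]
          abel
        have e2 := hstep ((-(k : ℤ) - 1) • A)
        rw [e1, ih] at e2
        have e3 : ψ ((-(k : ℤ) - 1) • A) = (-(k : ℤ)) • A + ψ 0 - A := by
          rw [e2]; abel
        rw [e3, sub_zsmul, one_zsmul]
        abel
  have hclosed : IsClosed {x : UnitAddCircle | ψ x = x + ψ 0} :=
    isClosed_eq hψc (continuous_id.add continuous_const)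
  have hsub : {z : UnitAddCircle | ∃ n : ℤ, z = n • A} ⊆ {x | ψ x = x + ψ 0} := by
    rintro z ⟨n, rfl⟩
    exact hiter n
  have hall : ∀ x : UnitAddCircle, ψ x = x + ψ 0 := by
    intro x
    have hx : x ∈ closure {z : UnitAddCircle | ∃ n : ℤ, z = n • A} := dense_zmul α hα x
    exact closure_minimal hsub hclosed hx
  intro y
  have := hall (φ y)
  rw [hψ] at this
  simp only [φ.symm_apply_apply] at this
  calc g y = φ.symm (φ (g y)) := (φ.symm_apply_apply _).symm
    _ = φ.symm (φ y + ψ 0) := by rw [this]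
    _ = φ.symm (φ y + φ (g (φ.symm 0))) := rfl




/-- The value in `[-1/2, 1/2)` representing a point of the circle. -/
noncomputable def sec (z : UnitAddCircle) : ℝ :=
  (AddCircle.equivIco 1 (-2⁻¹) z : ℝ)

lemma sec_coe (z : UnitAddCircle) : ((sec z : ℝ) : UnitAddCircle) = z :=
  (AddCircle.equivIco 1 (-2⁻¹)).symm_apply_apply z

lemma sec_mem (z : UnitAddCircle) : sec z ∈ Ico (-2⁻¹ : ℝ) (-2⁻¹ + 1) :=
  (AddCircle.equivIco 1 (-2⁻¹) z).2

lemma sec_of_mem {b : ℝ} (hb : b ∈ Ico (-2⁻¹ : ℝ) (-2⁻¹ + 1)) :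
    sec ((b : ℝ) : UnitAddCircle) = b := by
  have : AddCircle.equivIco 1 (-2⁻¹) ((b : ℝ) : UnitAddCircle) =
      ⟨toIcoMod (zero_lt_one) (-2⁻¹) b, toIcoMod_mem_Ico _ _ _⟩ :=
    QuotientAddGroup.equivIcoMod_coe _ _ _
  rw [sec, this]
  exact (toIcoMod_eq_self _).mpr hb

lemma sec_zero : sec (0 : UnitAddCircle) = 0 := by
  have h0 : ((0 : ℝ) : UnitAddCircle) = (0 : UnitAddCircle) := by norm_num
  rw [← h0, sec_of_mem (by norm_num)]

lemma sec_continuousAt {z : UnitAddCircle} (hz : z ≠ (((-2⁻¹ : ℝ)) : UnitAddCircle)) :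
    ContinuousAt sec z :=
  continuousAt_subtype_val.comp (AddCircle.continuousAt_equivIco 1 (-2⁻¹) hz)

/-- Construction of a continuous monotone degree-one lift from an "avoidance" hypothesis. -/
lemma exists_lift (e : UnitAddCircle → UnitAddCircle) (hec : Continuous e)
    (hei : Function.Injective e)
    (hav : ∀ y : UnitAddCircle, e y - y ≠ (((-2⁻¹ : ℝ)) : UnitAddCircle)) :
    ∃ G : CircleDeg1Lift, Continuous ⇑G ∧ (∀ x : ℝ, ((G x : ℝ) : UnitAddCircle) = e x) ∧
      (∀ x : ℝ, G x - x = sec (e x - (x : UnitAddCircle))) := by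
  set d : ℝ → ℝ := fun x => sec (e x - (x : UnitAddCircle)) with hd
  set F : ℝ → ℝ := fun x => x + d x with hF
  have hproj : ∀ x : ℝ, ((F x : ℝ) : UnitAddCircle) = e x := by
    intro x
    rw [hF]
    push_cast [AddCircle.coe_add]
    rw [hd]
    simp only []
    rw [sec_coe]
    abel
  have hdint : ∀ (x : ℝ) (m : ℤ), d (x + m) = d x := by
    intro x m
    have : ((x + m : ℝ) : UnitAddCircle) = (x : UnitAddCircle) := by
      rw [AddCircle.coe_add, coe_int_zero, add_zero]
    simp only [hd, this]
  have hF1 : ∀ x, F (x + 1) = F x + 1 := by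
    intro x
    have := hdint x (1 : ℤ)
    simp only [Int.cast_one] at this
    simp only [hF, this]
    ring
  have hFint : ∀ (x : ℝ) (m : ℤ), F (x + m) = F x + m := by
    intro x m
    simp only [hF, hdint x m]
    ring
  have hFinj : Function.Injective F := by
    intro x y hxy
    have h1 : e (x : UnitAddCircle) = e (y : UnitAddCircle) := by
      rw [← hproj x, ← hproj y, hxy]
    have h2 : (x : UnitAddCircle) = (y : UnitAddCircle) := hei h1
    obtain ⟨m, rfl⟩ := coe_eq_coe_iff.mp h2
    have := hFint y m
    rw [hxy] at this
    have hm : (m : ℝ) = 0 := by linarith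
    rw [hm, add_zero]
  have hFc : Continuous F := by
    refine continuous_id.add ?_
    rw [continuous_iff_continuousAt]
    intro x
    have h1 : ContinuousAt (fun x : ℝ => e (x : UnitAddCircle) - (x : UnitAddCircle)) x := by
      apply Continuous.continuousAt
      exact (hec.comp (AddCircle.continuous_mk' 1)).sub (AddCircle.continuous_mk' 1)
    have h2 : ContinuousAt (sec ∘ fun x : ℝ => e (x : UnitAddCircle) - (x : UnitAddCircle)) x :=
      ContinuousAt.comp (sec_continuousAt (hav _)) h1
    exact h2
  have hmono : Monotone F := by
    rcases hFc.strictMono_of_inj hFinj with hsm | hsa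
    · exact hsm.monotone
    · exfalso
      have h1 : F 1 < F 0 := hsa zero_lt_one
      have h2 : F (0 + 1) = F 0 + 1 := hF1 0
      rw [zero_add] at h2
      linarith
  refine ⟨CircleDeg1Lift.mk ⟨F, hmono⟩ hF1, ?_, ?_, ?_⟩
  · exact hFc
  · exact hproj
  · intro x
    show F x - x = d x
    simp only [hF]
    ring




lemma rot_inj (φ : UnitAddCircle ≃ₜ UnitAddCircle) (γ : UnitAddCircle) :
    Function.Injective fun y : UnitAddCircle => φ.symm (φ y + γ) := by
  intro y₁ y₂ h12
  have h1 : φ y₁ + γ = φ y₂ + γ := φ.symm.injective h12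
  have h2 : φ y₁ = φ y₂ := by
    have := add_right_cancel h1
    exact this
  exact φ.injective h2

lemma tau_small (φ : UnitAddCircle ≃ₜ UnitAddCircle) (ε : ℝ) (hε0 : 0 < ε) (hε2 : ε ≤ 2⁻¹) :
    ∃ V ∈ nhds (0 : UnitAddCircle), ∀ γ ∈ V,
      ∃ G : CircleDeg1Lift, Continuous ⇑G ∧
        (∀ x : ℝ, ((G x : ℝ) : UnitAddCircle) = φ.symm (φ x + γ)) ∧
        |G.translationNumber| ≤ ε := by
  have hbadmem : (-2⁻¹ : ℝ) ∈ Ico (-2⁻¹ : ℝ) (-2⁻¹ + 1) := by norm_num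
  have hsecbad : sec (((-2⁻¹ : ℝ)) : UnitAddCircle) = -2⁻¹ := sec_of_mem hbadmem
  set c : UnitAddCircle × UnitAddCircle → UnitAddCircle :=
    fun p => φ.symm (φ p.2 + p.1) - p.2 with hc
  have hcc : Continuous c := by
    apply Continuous.sub
    · exact φ.symm.continuous.comp ((φ.continuous.comp continuous_snd).add continuous_fst)
    · exact continuous_snd
  set Q : Set (UnitAddCircle × UnitAddCircle) := {p | sec (c p) ∈ Ioo (-ε) ε} with hQ
  have hQopen : IsOpen Q := by
    rw [isOpen_iff_mem_nhds]
    intro p hp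
    have hpc : c p ≠ (((-2⁻¹ : ℝ)) : UnitAddCircle) := by
      intro hbad
      rw [hQ, mem_setOf_eq, hbad, hsecbad] at hp
      have := hp.1
      linarith
    have hcont : ContinuousAt (sec ∘ c) p :=
      ContinuousAt.comp (sec_continuousAt hpc) hcc.continuousAt
    exact hcont.preimage_mem_nhds (isOpen_Ioo.mem_nhds hp)
  set B : Set UnitAddCircle := Prod.fst '' Qᶜ with hB
  have hBclosed : IsClosed B :=
    ((hQopen.isClosed_compl.isCompact).image continuous_fst).isClosed
  have h0B : (0 : UnitAddCircle) ∉ B := by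
    rintro ⟨p, hp, hfst⟩
    apply hp
    rw [hQ, mem_setOf_eq]
    have hcp : c p = 0 := by
      rw [hc]
      simp only []
      rw [hfst, add_zero, φ.symm_apply_apply, sub_self]
    rw [hcp, sec_zero]
    exact ⟨by linarith, hε0⟩
  refine ⟨Bᶜ, hBclosed.isOpen_compl.mem_nhds h0B, ?_⟩
  intro γ hγ
  have hQall : ∀ y : UnitAddCircle, (γ, y) ∈ Q := by
    intro y
    by_contra hy
    exact hγ ⟨(γ, y), hy, rfl⟩
  set e : UnitAddCircle → UnitAddCircle := fun y => φ.symm (φ y + γ) with he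
  have hec : Continuous e :=
    φ.symm.continuous.comp (φ.continuous.add continuous_const)
  have hei : Function.Injective e := rot_inj φ γ
  have hav : ∀ y : UnitAddCircle, e y - y ≠ (((-2⁻¹ : ℝ)) : UnitAddCircle) := by
    intro y hbad
    have h1 := hQall y
    rw [hQ, mem_setOf_eq] at h1
    have h2 : c (γ, y) = e y - y := rfl
    rw [h2, hbad, hsecbad] at h1
    have := h1.1
    linarith
  obtain ⟨G, hGc, hGp, hGd⟩ := exists_lift e hec hei hav
  refine ⟨G, hGc, hGp, ?_⟩
  have hdisp : ∀ x : ℝ, G x - x ∈ Ioo (-ε) ε := by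
    intro x
    rw [hGd x]
    exact hQall ((x : ℝ) : UnitAddCircle)
  rw [abs_le]
  constructor
  · apply CircleDeg1Lift.le_translationNumber_of_add_le
    intro x
    have := (hdisp x).1
    linarith
  · apply CircleDeg1Lift.translationNumber_le_of_le_add
    intro x
    have := (hdisp x).2
    linarith

lemma exists_lift_rot (φ : UnitAddCircle ≃ₜ UnitAddCircle) (β : UnitAddCircle) :
    ∃ G : CircleDeg1Lift, Continuous ⇑G ∧
      ∀ x : ℝ, ((G x : ℝ) : UnitAddCircle) = φ.symm (φ x + β) := by
  obtain ⟨V, hV, hVp⟩ := tau_small φ 2⁻¹ (by norm_num) le_rfl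
  obtain ⟨b, hb⟩ : ∃ b : ℝ, ((b : ℝ) : UnitAddCircle) = β := by
    induction β using QuotientAddGroup.induction_on with
    | H b => exact ⟨b, rfl⟩
  have t0 : Tendsto (fun n : ℕ => ((n : ℝ) + 1)) atTop atTop :=
    tendsto_atTop_add_const_right atTop 1 tendsto_natCast_atTop_atTop
  have t1 : Tendsto (fun n : ℕ => b / ((n : ℝ) + 1)) atTop (nhds 0) :=
    Tendsto.div_atTop tendsto_const_nhds t0
  have hπ : Tendsto (fun r : ℝ => ((r : ℝ) : UnitAddCircle)) (nhds 0) (nhds 0) := by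
    have h1 := (AddCircle.continuous_mk' (1 : ℝ)).tendsto (0 : ℝ)
    simpa using h1
  have htend : Tendsto (fun n : ℕ => ((b / ((n : ℝ) + 1) : ℝ) : UnitAddCircle)) atTop (nhds 0) :=
    hπ.comp t1
  have hev : ∀ᶠ n : ℕ in atTop, ((b / ((n : ℝ) + 1) : ℝ) : UnitAddCircle) ∈ V := htend hV
  obtain ⟨N, hN⟩ := hev.exists
  set γ : UnitAddCircle := ((b / ((N : ℝ) + 1) : ℝ) : UnitAddCircle) with hγ
  obtain ⟨G₁, hG₁c, hG₁p, _⟩ := hVp γ hN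
  have claim : ∀ (k : ℕ) (x : ℝ), (((G₁ ^ k) x : ℝ) : UnitAddCircle)
      = φ.symm (φ ((x : ℝ) : UnitAddCircle) + k • γ) := by
    intro k
    induction k with
    | zero =>
        intro x
        simp [CircleDeg1Lift.coe_one]
    | succ k ih =>
        intro x
        rw [pow_succ, CircleDeg1Lift.mul_apply]
        rw [ih (G₁ x), hG₁p x]
        congr 1
        rw [φ.apply_symm_apply, succ_nsmul]
        abel
  have hsmul : (N + 1) • γ = β := by
    rw [hγ, ← AddCircle.coe_nsmul, nsmul_eq_mul]
    push_cast
    rw [mul_comm, div_mul_cancel₀ _ (by positivity : ((N : ℝ) + 1) ≠ 0)]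
    exact hb
  refine ⟨G₁ ^ (N + 1), G₁.continuous_pow hG₁c (N + 1), ?_⟩
  intro x
  rw [claim (N + 1) x]
  congr 1
  rw [show ((N + 1 : ℕ) : ℕ) • γ = (N + 1) • γ from rfl, hsmul]

end Stmt5Aux
/-- For a circle homeomorphism `h` conjugate to an irrational rotation, the rotation
number map restricted to the centralizer `Z⁰(h)` is an injective group homomorphism into
`S¹ = ℝ/ℤ`, continuous for the uniform (`C⁰`) topology. -/
theorem stmt_5 (α : ℝ) (hα : Irrational α) (h φ : UnitAddCircle ≃ₜ UnitAddCircle)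
    (hconj : ∀ x, φ (h (φ.symm x)) = x + (α : UnitAddCircle)) :
    Set.InjOn circleRotationNumber
        {g : UnitAddCircle ≃ₜ UnitAddCircle | ∀ x, g (h x) = h (g x)} ∧
    (∀ g₁ g₂ : UnitAddCircle ≃ₜ UnitAddCircle,
        (∀ x, g₁ (h x) = h (g₁ x)) → (∀ x, g₂ (h x) = h (g₂ x)) →
        circleRotationNumber (g₁.trans g₂)
          = circleRotationNumber g₁ + circleRotationNumber g₂) ∧
    (∀ (u : ℕ → UnitAddCircle ≃ₜ UnitAddCircle) (g : UnitAddCircle ≃ₜ UnitAddCircle),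
        (∀ k x, (u k) (h x) = h ((u k) x)) → (∀ x, g (h x) = h (g x)) →
        TendstoUniformly (fun k x => (u k) x) (fun x => g x) Filter.atTop →
        Filter.Tendsto (fun k => circleRotationNumber (u k)) Filter.atTop
          (nhds (circleRotationNumber g))) := by
  have hform : ∀ g' : UnitAddCircle ≃ₜ UnitAddCircle, (∀ x, g' (h x) = h (g' x)) →
      ∀ y, g' y = φ.symm (φ y + φ (g' (φ.symm 0))) :=
    fun g' hg' => Stmt5Aux.classify α hα h φ hconj hg'
  have key : ∀ (g' : UnitAddCircle ≃ₜ UnitAddCircle) (β : UnitAddCircle),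
      (∀ y, g' y = φ.symm (φ y + β)) →
      ∀ G : CircleDeg1Lift, (∀ x : ℝ, ((G x : ℝ) : UnitAddCircle) = φ.symm (φ x + β)) →
      circleRotationNumber g' = ((G.translationNumber : ℝ) : UnitAddCircle) := by
    intro g' β hgβ G hG
    apply Stmt5Aux.circleRotationNumber_eq
    intro x
    rw [hG x, ← hgβ]
  have hcomm : ∀ (β γ z : UnitAddCircle),
      φ.symm (φ (φ.symm (φ z + γ)) + β) = φ.symm (φ z + (β + γ)) := by
    intro β γ z
    rw [φ.apply_symm_apply]
    congr 1
    abel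
  have tadd : ∀ (β γ : UnitAddCircle) (A B : CircleDeg1Lift),
      (∀ x : ℝ, ((A x : ℝ) : UnitAddCircle) = φ.symm (φ x + β)) →
      (∀ x : ℝ, ((B x : ℝ) : UnitAddCircle) = φ.symm (φ x + γ)) →
      ((A * B).translationNumber = A.translationNumber + B.translationNumber) ∧
      (∀ x : ℝ, (((A * B) x : ℝ) : UnitAddCircle) = φ.symm (φ x + (β + γ))) := by
    intro β γ A B hA hB
    have hABp : ∀ x : ℝ, (((A * B) x : ℝ) : UnitAddCircle) = φ.symm (φ x + (β + γ)) := by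
      intro x
      rw [CircleDeg1Lift.mul_apply]
      calc ((A (B x) : ℝ) : UnitAddCircle)
          = φ.symm (φ ((B x : ℝ) : UnitAddCircle) + β) := hA (B x)
        _ = φ.symm (φ (φ.symm (φ ((x : ℝ) : UnitAddCircle) + γ)) + β) := by rw [hB x]
        _ = φ.symm (φ ((x : ℝ) : UnitAddCircle) + (β + γ)) := hcomm β γ _
    have h12 : ∀ z : UnitAddCircle, (fun y => φ.symm (φ y + β)) ((fun y => φ.symm (φ y + γ)) z)
        = (fun y => φ.symm (φ y + γ)) ((fun y => φ.symm (φ y + β)) z) := by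
      intro z
      simp only []
      rw [hcomm β γ z, hcomm γ β z, add_comm β γ]
    have hinj : Function.Injective
        ((fun y : UnitAddCircle => φ.symm (φ y + β)) ∘ (fun y => φ.symm (φ y + γ))) :=
      (Stmt5Aux.rot_inj φ β).comp (Stmt5Aux.rot_inj φ γ)
    exact ⟨Stmt5Aux.tau_add (e₁ := fun y => φ.symm (φ y + β))
      (e₂ := fun y => φ.symm (φ y + γ)) h12 hinj hA hB, hABp⟩
  refine ⟨?_, ?_, ?_⟩
  · -- Injectivity
    intro g₁ hg₁ g₂ hg₂ heq
    have hf₁ := hform g₁ hg₁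
    have hf₂ := hform g₂ hg₂
    set β₁ := φ (g₁ (φ.symm 0)) with hβ₁
    set β₂ := φ (g₂ (φ.symm 0)) with hβ₂
    obtain ⟨A, hAc, hAp⟩ := Stmt5Aux.exists_lift_rot φ β₁
    obtain ⟨B, hBc, hBp⟩ := Stmt5Aux.exists_lift_rot φ β₂
    obtain ⟨D, hDc, hDp⟩ := Stmt5Aux.exists_lift_rot φ (β₁ - β₂)
    have h1 : circleRotationNumber g₁ = ((A.translationNumber : ℝ) : UnitAddCircle) :=
      key g₁ β₁ hf₁ A hAp
    have h2 : circleRotationNumber g₂ = ((B.translationNumber : ℝ) : UnitAddCircle) :=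
      key g₂ β₂ hf₂ B hBp
    obtain ⟨hτBD, hBDp⟩ := tadd β₂ (β₁ - β₂) B D hBp hDp
    have hβsum : β₂ + (β₁ - β₂) = β₁ := by abel
    have hBDp' : ∀ x : ℝ, (((B * D) x : ℝ) : UnitAddCircle) = φ.symm (φ x + β₁) := by
      intro x; rw [hBDp x, hβsum]
    have h3 : ((A.translationNumber : ℝ) : UnitAddCircle)
        = (((B * D).translationNumber : ℝ) : UnitAddCircle) :=
      Stmt5Aux.tau_mod_eq (Stmt5Aux.rot_inj φ β₁) hAp hBDp'
    have h5 : ((A.translationNumber : ℝ) : UnitAddCircle)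
        = ((B.translationNumber : ℝ) : UnitAddCircle) := by
      rw [← h1, ← h2, heq]
    rw [hτBD, AddCircle.coe_add] at h3
    have h6 : ((B.translationNumber : ℝ) : UnitAddCircle)
        + ((D.translationNumber : ℝ) : UnitAddCircle)
        = ((B.translationNumber : ℝ) : UnitAddCircle) := by
      rw [← h3, h5]
    have h4 : ((D.translationNumber : ℝ) : UnitAddCircle) = 0 := add_eq_left.mp h6
    have h0 : (((0 : ℝ)) : UnitAddCircle) = 0 := by norm_num
    obtain ⟨n, hn⟩ := (Stmt5Aux.coe_eq_coe_iff (x := D.translationNumber) (y := (0 : ℝ))).mp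
      (h4.trans h0.symm)
    have hτD : D.translationNumber = (n : ℝ) := by rw [hn, zero_add]
    obtain ⟨x, hx⟩ := (D.translationNumber_eq_int_iff hDc).mp hτD
    have h7 : ((D x : ℝ) : UnitAddCircle) = ((x : ℝ) : UnitAddCircle) := by
      rw [hx, AddCircle.coe_add, Stmt5Aux.coe_int_zero, add_zero]
    rw [hDp x] at h7
    have h8 : φ ((x : ℝ) : UnitAddCircle) + (β₁ - β₂) = φ ((x : ℝ) : UnitAddCircle) := by
      have := congrArg φ h7
      rwa [φ.apply_symm_apply] at this
    have h9 : β₁ - β₂ = 0 := add_eq_left.mp h8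
    have hβ : β₁ = β₂ := sub_eq_zero.mp h9
    apply Homeomorph.ext
    intro y
    rw [hf₁ y, hf₂ y, hβ]
  · -- Homomorphism
    intro g₁ g₂ hg₁ hg₂
    have hf₁ := hform g₁ hg₁
    have hf₂ := hform g₂ hg₂
    set β₁ := φ (g₁ (φ.symm 0)) with hβ₁
    set β₂ := φ (g₂ (φ.symm 0)) with hβ₂
    obtain ⟨A, hAc, hAp⟩ := Stmt5Aux.exists_lift_rot φ β₁
    obtain ⟨B, hBc, hBp⟩ := Stmt5Aux.exists_lift_rot φ β₂
    obtain ⟨hτ, hABp⟩ := tadd β₁ β₂ A B hAp hBp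
    have htrans : ∀ y, (g₁.trans g₂) y = φ.symm (φ y + (β₁ + β₂)) := by
      intro y
      have h1 : (g₁.trans g₂) y = g₂ (g₁ y) := rfl
      rw [h1, hf₁ y, hf₂ (φ.symm (φ y + β₁)), hcomm β₂ β₁ y, add_comm β₂ β₁]
    have h12 : circleRotationNumber (g₁.trans g₂)
        = (((A * B).translationNumber : ℝ) : UnitAddCircle) :=
      key _ (β₁ + β₂) htrans (A * B) hABp
    rw [h12, hτ, AddCircle.coe_add, key g₁ β₁ hf₁ A hAp, key g₂ β₂ hf₂ B hBp]
  · -- Continuity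
    intro u g hu hg hconv
    have hfg := hform g hg
    have hfk : ∀ k, ∀ y, (u k) y = φ.symm (φ y + φ ((u k) (φ.symm 0))) :=
      fun k => hform (u k) (hu k)
    set β := φ (g (φ.symm 0)) with hβdef
    set βs : ℕ → UnitAddCircle := fun k => φ ((u k) (φ.symm 0)) with hβs
    have hβtend : Filter.Tendsto βs Filter.atTop (nhds β) := by
      have h1 : Filter.Tendsto (fun k => (u k) (φ.symm 0)) Filter.atTop
          (nhds (g (φ.symm 0))) := hconv.tendsto_at (φ.symm 0)
      exact (φ.continuous.continuousAt.tendsto.comp h1)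
    obtain ⟨Gβ, hGβc, hGβp⟩ := Stmt5Aux.exists_lift_rot φ β
    have hρg : circleRotationNumber g = ((Gβ.translationNumber : ℝ) : UnitAddCircle) :=
      key g β hfg Gβ hGβp
    have hδtend : Filter.Tendsto (fun k => βs k - β) Filter.atTop (nhds 0) := by
      have h1 := hβtend.sub_const β
      simpa using h1
    have hmain : Filter.Tendsto (fun k => circleRotationNumber (u k) - circleRotationNumber g)
        Filter.atTop (nhds 0) := by
      rw [Filter.tendsto_def]
      intro W hW
      have hπpre : (fun r : ℝ => ((r : ℝ) : UnitAddCircle)) ⁻¹' W ∈ nhds (0 : ℝ) := by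
        apply ContinuousAt.preimage_mem_nhds
        · exact (AddCircle.continuous_mk' (1 : ℝ)).continuousAt
        · have h0 : (((0 : ℝ)) : UnitAddCircle) = 0 := by norm_num
          rw [h0]; exact hW
      obtain ⟨ε, hε0, hεsub⟩ := Metric.mem_nhds_iff.mp hπpre
      have hε'0 : (0 : ℝ) < min (ε / 2) 2⁻¹ := by positivity
      have hε'2 : min (ε / 2) 2⁻¹ ≤ 2⁻¹ := min_le_right _ _
      have hε'ε : min (ε / 2) 2⁻¹ < ε := lt_of_le_of_lt (min_le_left _ _) (by linarith)
      obtain ⟨V, hV, hVp⟩ := Stmt5Aux.tau_small φ (min (ε / 2) 2⁻¹) hε'0 hε'2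
      have hev : ∀ᶠ k in Filter.atTop, (βs k - β) ∈ V := hδtend hV
      rw [show (fun k => circleRotationNumber (u k) - circleRotationNumber g) ⁻¹' W
          = {k | circleRotationNumber (u k) - circleRotationNumber g ∈ W} from rfl]
      filter_upwards [hev] with k hk
      obtain ⟨D, hDc, hDp, hDτ⟩ := hVp _ hk
      obtain ⟨hτ, hBDp⟩ := tadd β (βs k - β) Gβ D hGβp hDp
      have hsum : β + (βs k - β) = βs k := by abel
      have hUk : circleRotationNumber (u k)
          = (((Gβ * D).translationNumber : ℝ) : UnitAddCircle) := by
        apply key (u k) (βs k) (hfk k) (Gβ * D)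
        intro x
        rw [hBDp x, hsum]
      show circleRotationNumber (u k) - circleRotationNumber g ∈ W
      rw [hUk, hρg, hτ, AddCircle.coe_add, add_sub_cancel_left]
      apply hεsub
      rw [Metric.mem_ball]
      have hd : dist D.translationNumber (0 : ℝ) = |D.translationNumber| := by
        rw [Real.dist_eq, sub_zero]
      rw [hd]
      exact lt_of_le_of_lt hDτ hε'ε
    have hfinal := hmain.add_const (circleRotationNumber g)
    simp only [zero_add, sub_add_cancel] at hfinal
    exact hfinal
end

section
/- Let D ⊂ ℂ^q be an open polydisc, D' ⊂ D a relatively compact open polydisc, and (f_k) a sequence of injective holomorphic maps f_k: D → ℂ^q that are uniformly bounded, such that each f_k(D') contains a fixed polydisc D''. Then there is a subsequence (f_{k_j}) converging uniformly on compact subsets of D to a holomorphic map f, and if f is injective on D', the inverse maps f_{k_j}^{-1} converge on D'' to f^{-1}. -/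
/-- An open polydisc in `ℂ^q`. -/
def IsPolydisc {q : ℕ} (S : Set (EuclideanSpace ℂ (Fin q))) : Prop :=
  ∃ (a : EuclideanSpace ℂ (Fin q)) (r : Fin q → ℝ), (∀ i, 0 < r i) ∧
    S = {z | ∀ i, ‖z i - a i‖ < r i}

open Filter Metric Set Function


lemma polydisc_isOpen {q : ℕ} {S : Set (EuclideanSpace ℂ (Fin q))} (h : IsPolydisc S) :
    IsOpen S := by
  obtain ⟨a, r, hr, rfl⟩ := h
  have he : {z : EuclideanSpace ℂ (Fin q) | ∀ i, ‖z i - a i‖ < r i}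
      = ⋂ i, {z : EuclideanSpace ℂ (Fin q) | ‖z i - a i‖ < r i} := by
    ext p; simp [Set.mem_iInter]
  rw [he]
  refine isOpen_iInter_of_finite fun i => ?_
  have hc : Continuous fun p : EuclideanSpace ℂ (Fin q) => p i :=
    (EuclideanSpace.proj (𝕜 := ℂ) i).continuous
  exact isOpen_lt (continuous_norm.comp (hc.sub continuous_const)) continuous_const

lemma polydisc_nonempty {q : ℕ} {S : Set (EuclideanSpace ℂ (Fin q))} (h : IsPolydisc S) :
    S.Nonempty := by
  obtain ⟨a, r, hr, rfl⟩ := h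
  exact ⟨a, fun i => by simpa [sub_self] using hr i⟩

lemma polydisc_bounded {q : ℕ} {S : Set (EuclideanSpace ℂ (Fin q))} (h : IsPolydisc S) :
    Bornology.IsBounded S := by
  obtain ⟨a, r, hr, rfl⟩ := h
  refine (Metric.isBounded_closedBall (x := a) (r := Real.sqrt (∑ i, r i ^ 2))).subset ?_
  intro p hp
  rw [mem_closedBall, EuclideanSpace.dist_eq]
  refine Real.sqrt_le_sqrt (Finset.sum_le_sum fun i _ => ?_)
  have h1 : dist (p i) (a i) ≤ r i := by
    rw [Complex.dist_eq]; exact le_of_lt (hp i)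
  exact pow_le_pow_left₀ dist_nonneg h1 2

lemma schwarz_lip {q : ℕ} {g : EuclideanSpace ℂ (Fin q) → EuclideanSpace ℂ (Fin q)}
    {x : EuclideanSpace ℂ (Fin q)} {R C : ℝ} (hC : 0 ≤ C) (hR : 0 < R)
    (hg : DifferentiableOn ℂ g (ball x R))
    (hb : ∀ p ∈ ball x R, ‖g p‖ ≤ C) {y : EuclideanSpace ℂ (Fin q)} (hy : y ∈ ball x R) :
    dist (g y) (g x) ≤ (2 * C + 1) / R * dist y x := by
  rcases eq_or_ne y x with rfl | hne
  · simp
  set u := y - x with hu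
  have hune : u ≠ 0 := sub_ne_zero.mpr hne
  have hun : 0 < ‖u‖ := norm_pos_iff.mpr hune
  set A : ℂ → EuclideanSpace ℂ (Fin q) := fun t => x + t • u with hA
  have hAdiff : Differentiable ℂ A := (differentiable_id.smul_const u).const_add x
  have hAmaps : ∀ t : ℂ, t ∈ ball (0:ℂ) (R / ‖u‖) → A t ∈ ball x R := by
    intro t ht
    rw [mem_ball, dist_zero_right] at ht
    rw [mem_ball, dist_eq_norm]
    have h1 : x + t • u - x = t • u := by abel
    rw [hA]
    simp only []
    rw [h1, norm_smul]
    calc ‖t‖ * ‖u‖ < (R / ‖u‖) * ‖u‖ := mul_lt_mul_of_pos_right ht hun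
      _ = R := div_mul_cancel₀ R (ne_of_gt hun)
  have hgA : DifferentiableOn ℂ (g ∘ A) (ball (0:ℂ) (R / ‖u‖)) :=
    hg.comp hAdiff.differentiableOn (fun t ht => hAmaps t ht)
  have hA0 : A 0 = x := by simp [hA]
  have hmaps : MapsTo (g ∘ A) (ball (0:ℂ) (R / ‖u‖)) (ball ((g ∘ A) 0) (2 * C + 1)) := by
    intro t ht
    rw [mem_ball]
    calc dist ((g ∘ A) t) ((g ∘ A) 0) ≤ ‖g (A t)‖ + ‖g (A 0)‖ := dist_le_norm_add_norm _ _
      _ ≤ C + C := add_le_add (hb _ (hAmaps t ht)) (by rw [hA0]; exact hb _ (mem_ball_self hR))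
      _ < 2 * C + 1 := by linarith
  have h1mem : (1:ℂ) ∈ ball (0:ℂ) (R / ‖u‖) := by
    rw [mem_ball, dist_zero_right, norm_one, lt_div_iff₀ hun]
    have : ‖u‖ < R := by
      rw [hu, ← dist_eq_norm]; exact mem_ball.mp hy
    linarith
  have key := Complex.dist_le_div_mul_dist_of_mapsTo_ball hgA (hmaps.mono_right ball_subset_closedBall) h1mem
  have hA1 : A 1 = y := by rw [hA]; simp [hu]
  have hgy : (g ∘ A) 1 = g y := by rw [Function.comp_apply, hA1]
  have hgx : (g ∘ A) 0 = g x := by rw [Function.comp_apply, hA0]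
  rw [hgy, hgx] at key
  have hred : (2 * C + 1) / (R / ‖u‖) * dist (1:ℂ) 0 = (2 * C + 1) / R * dist y x := by
    rw [dist_zero_right, norm_one, dist_eq_norm, ← hu]
    rw [div_div_eq_mul_div, mul_one, mul_div_assoc]
    ring
  rw [hred] at key
  exact key

lemma schwarz_deriv {q : ℕ} {g : EuclideanSpace ℂ (Fin q) → EuclideanSpace ℂ (Fin q)}
    {x : EuclideanSpace ℂ (Fin q)} {R ε : ℝ} (hR : 0 < R) (hε : 0 < ε)
    (hg : DifferentiableOn ℂ g (ball x R))
    (hb : ∀ p ∈ ball x R, ‖g p‖ < ε) :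
    ‖fderiv ℂ g x‖ ≤ 2 * ε / R := by
  have hgx : DifferentiableAt ℂ g x := hg.differentiableAt (isOpen_ball.mem_nhds (mem_ball_self hR))
  refine ContinuousLinearMap.opNorm_le_bound _ (by positivity) fun v => ?_
  rcases eq_or_ne v 0 with rfl | hv
  · simp
  have hvn : 0 < ‖v‖ := norm_pos_iff.mpr hv
  set A : ℂ → EuclideanSpace ℂ (Fin q) := fun t => x + t • v with hA
  have hAdiff : Differentiable ℂ A := (differentiable_id.smul_const v).const_add x
  have hAmaps : ∀ t : ℂ, t ∈ ball (0:ℂ) (R / ‖v‖) → A t ∈ ball x R := by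
    intro t ht
    rw [mem_ball, dist_zero_right] at ht
    rw [mem_ball, dist_eq_norm]
    have h1 : x + t • v - x = t • v := by abel
    rw [hA]
    simp only []
    rw [h1, norm_smul]
    calc ‖t‖ * ‖v‖ < (R / ‖v‖) * ‖v‖ := mul_lt_mul_of_pos_right ht hvn
      _ = R := div_mul_cancel₀ R (ne_of_gt hvn)
  have hgA : DifferentiableOn ℂ (g ∘ A) (ball (0:ℂ) (R / ‖v‖)) :=
    hg.comp hAdiff.differentiableOn (fun t ht => hAmaps t ht)
  have hA0 : A 0 = x := by simp [hA]
  have hmaps : MapsTo (g ∘ A) (ball (0:ℂ) (R / ‖v‖)) (ball ((g ∘ A) 0) (2 * ε)) := by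
    intro t ht
    rw [mem_ball]
    calc dist ((g ∘ A) t) ((g ∘ A) 0) ≤ ‖g (A t)‖ + ‖g (A 0)‖ := dist_le_norm_add_norm _ _
      _ < ε + ε := add_lt_add (hb _ (hAmaps t ht)) (by rw [hA0]; exact hb _ (mem_ball_self hR))
      _ = 2 * ε := by ring
  have hR₁ : 0 < R / ‖v‖ := by positivity
  have key := Complex.norm_deriv_le_div_of_mapsTo_ball hgA (hmaps.mono_right ball_subset_closedBall) hR₁
  have hAd : HasDerivAt A v 0 := by
    have h1 : HasDerivAt (fun t : ℂ => t) 1 0 := hasDerivAt_id 0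
    have h2 := h1.smul_const v
    have h3 := h2.const_add x
    simpa [hA] using h3
  have hcomp : HasDerivAt (g ∘ A) (fderiv ℂ g x v) 0 := by
    have hl : HasFDerivAt g (fderiv ℂ g x) (A 0) := by rw [hA0]; exact hgx.hasFDerivAt
    exact hl.comp_hasDerivAt 0 hAd
  rw [hcomp.deriv] at key
  calc ‖fderiv ℂ g x v‖ ≤ 2 * ε / (R / ‖v‖) := key
    _ = 2 * ε / R * ‖v‖ := by field_simp
/-- Montel-type statement: a uniformly bounded sequence of injective holomorphic
maps `f k : D → ℂ^q`, with `f k (D') ⊇ D''` for polydiscs `D'' ⊆ f k (D')`, `D̄' ⊆ D`, has a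
subsequence converging locally uniformly on `D` to a holomorphic `F`; and if `F` is injective on
`D'`, the inverse maps converge on `D''` to `F⁻¹`. -/
theorem stmt_13 (q : ℕ) (D D' D'' : Set (EuclideanSpace ℂ (Fin q)))
    (hD : IsPolydisc D) (hD' : IsPolydisc D') (hD'' : IsPolydisc D'')
    (hsub : closure D' ⊆ D)
    (f : ℕ → EuclideanSpace ℂ (Fin q) → EuclideanSpace ℂ (Fin q))
    (hhol : ∀ k, DifferentiableOn ℂ (f k) D)
    (hinj : ∀ k, Set.InjOn (f k) D)
    (hbdd : ∃ C : ℝ, ∀ k, ∀ z ∈ D, ‖f k z‖ ≤ C)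
    (hcover : ∀ k, D'' ⊆ f k '' D') :
    ∃ φ : ℕ → ℕ, StrictMono φ ∧
      ∃ F : EuclideanSpace ℂ (Fin q) → EuclideanSpace ℂ (Fin q),
        DifferentiableOn ℂ F D ∧
        TendstoLocallyUniformlyOn (fun j => f (φ j)) F Filter.atTop D ∧
        (Set.InjOn F D' → ∀ w ∈ D'',
          Filter.Tendsto (fun j => Function.invFunOn (f (φ j)) D' w) Filter.atTop
            (nhds (Function.invFunOn F D' w))) := by
  classical
  obtain ⟨C₀, hC₀⟩ := hbdd
  set C := max C₀ 0 with hCdef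
  have hC : ∀ k, ∀ p ∈ D, ‖f k p‖ ≤ C := fun k p hp => le_trans (hC₀ k p hp) (le_max_left _ _)
  have hCnn : (0:ℝ) ≤ C := le_max_right _ _
  have hDopen : IsOpen D := polydisc_isOpen hD
  have hD''open : IsOpen D'' := polydisc_isOpen hD''
  have hD'ne : D'.Nonempty := polydisc_nonempty hD'
  have hD'subD : D' ⊆ D := fun p hp => hsub (subset_closure hp)
  have hDne : D.Nonempty := ⟨hD'ne.choose, hD'subD hD'ne.choose_spec⟩
  haveI hsubne : Nonempty D := hDne.to_subtype
  set z : ℕ → EuclideanSpace ℂ (Fin q) := fun m => (TopologicalSpace.denseSeq D m : _) with hzdef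
  have hzD : ∀ m, z m ∈ D := fun m => (TopologicalSpace.denseSeq D m).2
  have hzdense : ∀ x ∈ D, ∀ δ : ℝ, 0 < δ → ∃ m, dist x (z m) < δ := by
    intro x hx δ hδ
    have h1 : (⟨x, hx⟩ : D) ∈ closure (range (TopologicalSpace.denseSeq D)) := by
      rw [(TopologicalSpace.denseRange_denseSeq D).closure_eq]
      exact mem_univ _
    obtain ⟨y, hyr, hyd⟩ := Metric.mem_closure_iff.mp h1 δ hδ
    obtain ⟨m, rfl⟩ := hyr
    exact ⟨m, by simpa [hzdef, Subtype.dist_eq] using hyd⟩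
  -- diagonal subsequence via compactness of a countable product of closed balls
  have hcompact : IsCompact (Set.pi (univ : Set ℕ)
      fun _ : ℕ => closedBall (0 : EuclideanSpace ℂ (Fin q)) C) :=
    isCompact_univ_pi fun _ => isCompact_closedBall _ _
  have hmem : ∀ k, (fun m => f k (z m)) ∈ Set.pi (univ : Set ℕ)
      (fun _ : ℕ => closedBall (0 : EuclideanSpace ℂ (Fin q)) C) := by
    intro k
    rw [Set.mem_univ_pi]
    intro m
    rw [mem_closedBall, dist_zero_right]
    exact hC k (z m) (hzD m)
  obtain ⟨L, -, φ, hφ, hLconv⟩ := hcompact.tendsto_subseq hmem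
  have hzconv : ∀ m, CauchySeq fun j => f (φ j) (z m) := by
    intro m
    have h1 := tendsto_pi_nhds.mp hLconv m
    exact h1.cauchySeq
  -- uniform Cauchy on compact subsets of D
  have ucauchy : ∀ K : Set (EuclideanSpace ℂ (Fin q)), K ⊆ D → IsCompact K →
      UniformCauchySeqOn (fun j => f (φ j)) Filter.atTop K := by
    intro K hKD hK
    rw [Metric.uniformCauchySeqOn_iff]
    intro ε hε
    obtain ⟨r, hr, hthick⟩ := hK.exists_thickening_subset_open hDopen hKD
    set Lc := (2 * C + 1) / r with hLc
    have hLcnn : 0 ≤ Lc := by rw [hLc]; positivity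
    have hLc1 : 0 < Lc + 1 := by linarith
    set δ := min (r / 2) (ε / (3 * (Lc + 1))) with hδdef
    have hδpos : 0 < δ :=
      lt_min (by positivity) (div_pos hε (by positivity))
    have hδr2 : δ ≤ r / 2 := min_le_left _ _
    have hLδ : Lc * δ ≤ ε / 3 := by
      have h1 : δ ≤ ε / (3 * (Lc + 1)) := min_le_right _ _
      have h2 : Lc * δ ≤ Lc * (ε / (3 * (Lc + 1))) := mul_le_mul_of_nonneg_left h1 hLcnn
      have h3 : Lc * (ε / (3 * (Lc + 1))) = ε / 3 * (Lc / (Lc + 1)) := by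
        field_simp
      have h4 : Lc / (Lc + 1) ≤ 1 := by
        rw [div_le_one hLc1]; linarith
      calc Lc * δ ≤ ε / 3 * (Lc / (Lc + 1)) := by rw [← h3]; exact h2
        _ ≤ ε / 3 * 1 := mul_le_mul_of_nonneg_left h4 (by positivity)
        _ = ε / 3 := mul_one _
    have hcov : K ⊆ ⋃ m : ℕ, ball (z m) δ := by
      intro x hx
      obtain ⟨m, hm⟩ := hzdense x (hKD hx) δ hδpos
      exact mem_iUnion.mpr ⟨m, by rwa [mem_ball]⟩
    obtain ⟨t, ht⟩ := hK.elim_finite_subcover (fun m => ball (z m) δ) (fun m => isOpen_ball) hcov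
    have hNc : ∀ m : ℕ, ∃ N, ∀ a ≥ N, ∀ b ≥ N,
        dist (f (φ a) (z m)) (f (φ b) (z m)) < ε / 3 :=
      fun m => Metric.cauchySeq_iff.mp (hzconv m) (ε / 3) (by positivity)
    choose N hN using hNc
    refine ⟨t.sup N, fun a ha b hb x hx => ?_⟩
    obtain ⟨m, hmt, hxm⟩ : ∃ m ∈ t, x ∈ ball (z m) δ := by
      simpa using ht hx
    have hNm : N m ≤ t.sup N := Finset.le_sup hmt
    have hmid : dist (f (φ a) (z m)) (f (φ b) (z m)) < ε / 3 :=
      hN m a (le_trans hNm ha) b (le_trans hNm hb)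
    have hbx : ball x r ⊆ D := by
      intro p hp
      apply hthick
      rw [Metric.mem_thickening_iff]
      exact ⟨x, hx, mem_ball.mp hp⟩
    have hzm : z m ∈ ball x r := by
      rw [mem_ball, dist_comm]
      exact lt_of_lt_of_le (lt_of_lt_of_le (mem_ball.mp hxm) hδr2) (by linarith)
    have hdzx : dist (z m) x ≤ δ := by
      rw [dist_comm]; exact le_of_lt (mem_ball.mp hxm)
    have hlipa := schwarz_lip hCnn hr ((hhol (φ a)).mono hbx)
      (fun p hp => hC (φ a) p (hbx hp)) hzm
    have hlipb := schwarz_lip hCnn hr ((hhol (φ b)).mono hbx)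
      (fun p hp => hC (φ b) p (hbx hp)) hzm
    rw [← hLc] at hlipa hlipb
    have hea : dist (f (φ a) (z m)) (f (φ a) x) ≤ ε / 3 :=
      le_trans hlipa (le_trans (mul_le_mul_of_nonneg_left hdzx hLcnn) hLδ)
    have heb : dist (f (φ b) (z m)) (f (φ b) x) ≤ ε / 3 :=
      le_trans hlipb (le_trans (mul_le_mul_of_nonneg_left hdzx hLcnn) hLδ)
    calc dist (f (φ a) x) (f (φ b) x)
        ≤ dist (f (φ a) x) (f (φ a) (z m)) + dist (f (φ a) (z m)) (f (φ b) (z m))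
            + dist (f (φ b) (z m)) (f (φ b) x) := dist_triangle4 _ _ _ _
      _ < ε / 3 + ε / 3 + ε / 3 := by
          have h1 : dist (f (φ a) x) (f (φ a) (z m)) ≤ ε / 3 := by rw [dist_comm]; exact hea
          have h2 : dist (f (φ b) (z m)) (f (φ b) x) ≤ ε / 3 := heb
          have h3 := hmid
          -- strict since middle strict and there is slack
          linarith
      _ = ε := by ring
  -- pointwise limits: define F
  have hptl : ∀ x : EuclideanSpace ℂ (Fin q), x ∈ D →
      ∃ l, Filter.Tendsto (fun j => f (φ j) x) Filter.atTop (nhds l) := by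
    intro x hx
    apply cauchySeq_tendsto_of_complete
    have h1 := ucauchy {x} (by simpa using hx) isCompact_singleton
    rw [Metric.uniformCauchySeqOn_iff] at h1
    rw [Metric.cauchySeq_iff]
    intro ε hε
    obtain ⟨Nn, hNn⟩ := h1 ε hε
    exact ⟨Nn, fun a ha b hb => hNn a ha b hb x (mem_singleton x)⟩
  choose! F hF using hptl
  have htluo : TendstoLocallyUniformlyOn (fun j => f (φ j)) F Filter.atTop D := by
    rw [tendstoLocallyUniformlyOn_iff_forall_isCompact hDopen]
    intro K hKD hK
    exact (ucauchy K hKD hK).tendstoUniformlyOn_of_tendsto fun x hx => hF x (hKD hx)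
  -- derivatives: uniform Cauchy on compacts
  have ucauchy' : ∀ K : Set (EuclideanSpace ℂ (Fin q)), K ⊆ D → IsCompact K →
      UniformCauchySeqOn (fun j x => fderiv ℂ (f (φ j)) x) Filter.atTop K := by
    intro K hKD hK
    rw [Metric.uniformCauchySeqOn_iff]
    intro ε hε
    obtain ⟨r, hr, hthick⟩ := hK.exists_thickening_subset_open hDopen hKD
    have hr0 : r ≠ 0 := ne_of_gt hr
    have hK2 : IsCompact (cthickening (r/2) K) := hK.cthickening
    have hK2D : cthickening (r/2) K ⊆ D :=
      subset_trans (cthickening_subset_thickening' hr (by linarith) K) hthick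
    set ε' := ε * r / 16 with hε'
    have hε'pos : 0 < ε' := by rw [hε']; positivity
    obtain ⟨Nn, hNn⟩ := Metric.uniformCauchySeqOn_iff.mp (ucauchy _ hK2D hK2) ε' hε'pos
    refine ⟨Nn, fun a ha b hb x hx => ?_⟩
    have hball : ball x (r/2) ⊆ cthickening (r/2) K := by
      intro p hp
      exact mem_cthickening_of_dist_le p x (r/2) K hx (le_of_lt (mem_ball.mp hp))
    have hballD : ball x (r/2) ⊆ D := subset_trans hball hK2D
    have hgd : DifferentiableOn ℂ (fun p => f (φ a) p - f (φ b) p) (ball x (r/2)) :=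
      ((hhol (φ a)).mono hballD).sub ((hhol (φ b)).mono hballD)
    have hgb : ∀ p ∈ ball x (r/2), ‖f (φ a) p - f (φ b) p‖ < ε' := by
      intro p hp
      have h1 := hNn a ha b hb p (hball hp)
      rwa [dist_eq_norm] at h1
    have hkey := schwarz_deriv (by positivity) hε'pos hgd hgb
    have hda : DifferentiableAt ℂ (f (φ a)) x :=
      (hhol (φ a)).differentiableAt (hDopen.mem_nhds (hKD hx))
    have hdb : DifferentiableAt ℂ (f (φ b)) x :=
      (hhol (φ b)).differentiableAt (hDopen.mem_nhds (hKD hx))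
    have hfd : fderiv ℂ (fun p => f (φ a) p - f (φ b) p) x
        = fderiv ℂ (f (φ a)) x - fderiv ℂ (f (φ b)) x := fderiv_sub hda hdb
    rw [dist_eq_norm]
    calc ‖fderiv ℂ (f (φ a)) x - fderiv ℂ (f (φ b)) x‖
        = ‖fderiv ℂ (fun p => f (φ a) p - f (φ b) p) x‖ := by rw [hfd]
      _ ≤ 2 * ε' / (r / 2) := hkey
      _ = ε / 4 := by rw [hε']; field_simp; ring
      _ < ε := by linarith
  have hptl' : ∀ x : EuclideanSpace ℂ (Fin q), x ∈ D →
      ∃ l, Filter.Tendsto (fun j => fderiv ℂ (f (φ j)) x) Filter.atTop (nhds l) := by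
    intro x hx
    apply cauchySeq_tendsto_of_complete
    have h1 := ucauchy' {x} (by simpa using hx) isCompact_singleton
    rw [Metric.uniformCauchySeqOn_iff] at h1
    rw [Metric.cauchySeq_iff]
    intro ε hε
    obtain ⟨Nn, hNn⟩ := h1 ε hε
    exact ⟨Nn, fun a ha b hb => hNn a ha b hb x (mem_singleton x)⟩
  choose! F' hF' using hptl'
  have htluo' : TendstoLocallyUniformlyOn (fun j x => fderiv ℂ (f (φ j)) x) F' Filter.atTop D := by
    rw [tendstoLocallyUniformlyOn_iff_forall_isCompact hDopen]
    intro K hKD hK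
    exact (ucauchy' K hKD hK).tendstoUniformlyOn_of_tendsto fun x hx => hF' x (hKD hx)
  have hFderiv : ∀ x ∈ D, HasFDerivAt F (F' x) x := by
    intro x hx
    refine hasFDerivAt_of_tendstoLocallyUniformlyOn hDopen htluo' (fun j y hy => ?_)
      (fun y hy => hF y hy) hx
    exact ((hhol (φ j)).differentiableAt (hDopen.mem_nhds hy)).hasFDerivAt
  have hFdiffOn : DifferentiableOn ℂ F D :=
    fun x hx => ((hFderiv x hx).differentiableAt).differentiableWithinAt
  refine ⟨φ, hφ, F, hFdiffOn, htluo, ?_⟩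
  -- Part 2: convergence of inverses
  intro hFinj w hw
  set x : ℕ → EuclideanSpace ℂ (Fin q) := fun j => Function.invFunOn (f (φ j)) D' w with hxdef
  have hxspec : ∀ j, x j ∈ D' ∧ f (φ j) (x j) = w := by
    intro j
    obtain ⟨p, hp, hpw⟩ := hcover (φ j) hw
    exact ⟨Function.invFunOn_mem ⟨p, hp, hpw⟩, Function.invFunOn_eq ⟨p, hp, hpw⟩⟩
  have hKc : IsCompact (closure D') := (polydisc_bounded hD').isCompact_closure
  have hpre : ∀ y, y ∈ D → F y ∈ D'' → y ∈ D' := by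
    intro y hyD hyF
    by_contra hyn
    have h1 : ∀ j, f (φ j) y ∈ D''ᶜ := by
      intro j
      simp only [mem_compl_iff]
      intro hmem
      obtain ⟨p, hpD', hpeq⟩ := hcover (φ j) hmem
      have hpy : p = y := hinj (φ j) (hD'subD hpD') hyD hpeq
      exact hyn (hpy ▸ hpD')
    have h2 : Filter.Tendsto (fun j => f (φ j) y) Filter.atTop (nhds (F y)) :=
      htluo.tendsto_at hyD
    exact (hD''open.isClosed_compl.mem_of_tendsto h2 (Filter.Eventually.of_forall h1)) hyF
  have huc : TendstoUniformlyOn (fun j => f (φ j)) F Filter.atTop (closure D') :=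
    (tendstoLocallyUniformlyOn_iff_forall_isCompact hDopen).mp htluo _ hsub hKc
  apply tendsto_of_subseq_tendsto
  intro ns hns
  obtain ⟨y, hyK, ms, hms, hyc⟩ := hKc.tendsto_subseq (fun n => subset_closure (hxspec (ns n)).1)
  have hyD : y ∈ D := hsub hyK
  have hFycont : ContinuousAt F y := (hFderiv y hyD).differentiableAt.continuousAt
  have hmain : Filter.Tendsto (fun l => f (φ (ns (ms l))) (x (ns (ms l)))) Filter.atTop
      (nhds (F y)) := by
    rw [Metric.tendsto_nhds]
    intro ε hε
    have h1 := Metric.tendstoUniformlyOn_iff.mp huc (ε/2) (by positivity)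
    have hcompt : Filter.Tendsto (fun l => ns (ms l)) Filter.atTop Filter.atTop :=
      hns.comp hms.tendsto_atTop
    have h1' : ∀ᶠ l in Filter.atTop, ∀ p ∈ closure D',
        dist (F p) (f (φ (ns (ms l))) p) < ε/2 := hcompt.eventually h1
    have h2 : Filter.Tendsto (fun l => F (x (ns (ms l)))) Filter.atTop (nhds (F y)) :=
      hFycont.tendsto.comp hyc
    have h2' : ∀ᶠ l in Filter.atTop, dist (F (x (ns (ms l)))) (F y) < ε/2 :=
      Metric.tendsto_nhds.mp h2 (ε/2) (by positivity)
    filter_upwards [h1', h2'] with l hl1 hl2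
    calc dist (f (φ (ns (ms l))) (x (ns (ms l)))) (F y)
        ≤ dist (f (φ (ns (ms l))) (x (ns (ms l)))) (F (x (ns (ms l))))
            + dist (F (x (ns (ms l)))) (F y) := dist_triangle _ _ _
      _ < ε/2 + ε/2 := add_lt_add (by
            rw [dist_comm]
            exact hl1 _ (subset_closure (hxspec (ns (ms l))).1)) hl2
      _ = ε := add_halves ε
  have hconst : Filter.Tendsto (fun l => f (φ (ns (ms l))) (x (ns (ms l)))) Filter.atTop
      (nhds w) := by
    have he : (fun l => f (φ (ns (ms l))) (x (ns (ms l)))) = fun _ => w :=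
      funext fun l => (hxspec (ns (ms l))).2
    rw [he]
    exact tendsto_const_nhds
  have hFy : F y = w := tendsto_nhds_unique hmain hconst
  have hyD' : y ∈ D' := hpre y hyD (by rw [hFy]; exact hw)
  have hex : ∃ p ∈ D', F p = w := ⟨y, hyD', hFy⟩
  have hb1 : Function.invFunOn F D' w ∈ D' := Function.invFunOn_mem hex
  have hb2 : F (Function.invFunOn F D' w) = w := Function.invFunOn_eq hex
  have hyeq : y = Function.invFunOn F D' w := hFinj hyD' hb1 (by rw [hFy, hb2])
  exact ⟨ms, by rw [← hyeq]; exact hyc⟩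
end
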